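/- Let d ≥ 1, let 0 < ε_C < ε_S ≤ 1, let u ∈ ℝ^d be a unit vector, let J be a finite index set, and for each i ∈ J let s_i = ℓ_i•u with ℓ_i > 0 be a site on the common ray from the origin 0 in direction u, with effective weight w_i ≥ 1 + ε_S. Then there exists a subset C ⊆ J with cardinality |C| ≤ 8/(ε_C·ε_S) such that for every j ∈ J, the intersection ⋂_{k ∈ C} ball(0,s_k,w_k) is contained in the (1+ε_C)-enlarged ball ball(0,s_j,w_j/(1+ε_C)); that is, ⋂_{k ∈ C} {p ∈ ℝ^d : w_k·‖p‖ ≤ ‖p − s_k‖} ⊆ {p ∈ ℝ^d : (w_j/(1+ε_C))·‖p‖ ≤ ‖p − s_j‖}. -/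

import Mathlib

open RealInnerProductSpace

/-- The Apollonian condition is equivalent to membership in a Euclidean ball. -/
lemma apollonius_iff {d : ℕ} (w L : ℝ) (hw : 1 < w) (hL : 0 < L)
    (u p : EuclideanSpace ℝ (Fin d)) (hu : ‖u‖ = 1) :
    w * ‖p‖ ≤ ‖p - L • u‖ ↔ ‖p + (L / (w ^ 2 - 1)) • u‖ ≤ L / (w ^ 2 - 1) * w := by
  have hd2 : (0:ℝ) < w ^ 2 - 1 := by nlinarith
  set t : ℝ := L / (w ^ 2 - 1) with hts
  have ht : 0 < t := div_pos hL hd2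
  have hLt : L = t * (w ^ 2 - 1) := by rw [hts, div_mul_cancel₀ _ (ne_of_gt hd2)]
  have hsub : ‖p - L • u‖ ^ 2 = ‖p‖ ^ 2 - 2 * (L * ⟪p, u⟫) + L ^ 2 := by
    rw [norm_sub_sq_real, real_inner_smul_right, norm_smul, hu]
    rw [Real.norm_eq_abs, abs_of_pos hL]; ring
  have hadd : ‖p + t • u‖ ^ 2 = ‖p‖ ^ 2 + 2 * (t * ⟪p, u⟫) + t ^ 2 := by
    rw [norm_add_sq_real, real_inner_smul_right, norm_smul, hu]
    rw [Real.norm_eq_abs, abs_of_pos ht]; ring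
  constructor
  · intro h
    have h2 : (w * ‖p‖) ^ 2 ≤ ‖p - L • u‖ ^ 2 := by
      apply pow_le_pow_left₀ (by positivity) h
    rw [hsub, hLt] at h2
    have h3 : ‖p + t • u‖ ^ 2 ≤ (t * w) ^ 2 := by
      rw [hadd]; nlinarith [h2, hd2, ht, sq_nonneg (‖p‖)]
    exact le_of_pow_le_pow_left₀ two_ne_zero (by positivity) h3
  · intro h
    have h2 : ‖p + t • u‖ ^ 2 ≤ (t * w) ^ 2 := by
      apply pow_le_pow_left₀ (by positivity) h
    rw [hadd] at h2
    have h3 : (w * ‖p‖) ^ 2 ≤ ‖p - L • u‖ ^ 2 := by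
      rw [hsub, hLt]; nlinarith [h2, hd2, ht, sq_nonneg (‖p‖)]
    exact le_of_pow_le_pow_left₀ two_ne_zero (by positivity) h3

/-- Containment of one Apollonian ball in the enlarged version of another. -/
lemma ball_subset {d : ℕ} (εC : ℝ) (hεC : 0 < εC)
    (u : EuclideanSpace ℝ (Fin d)) (hu : ‖u‖ = 1)
    (wk wj Lk Lj : ℝ) (hwk : 1 + εC < wk) (hwj : 1 + εC < wj)
    (hLk : 0 < Lk) (hLj : 0 < Lj)
    (hA : Lk * (wj + 1) ≤ Lj * (wk + 1))
    (hX : 2 * (wj - 1) ≤ (2 + εC * (wj - 1)) * (wk - 1)) :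
    {p : EuclideanSpace ℝ (Fin d) | wk * ‖p‖ ≤ ‖p - Lk • u‖} ⊆
      {p : EuclideanSpace ℝ (Fin d) | wj / (1 + εC) * ‖p‖ ≤ ‖p - Lj • u‖} := by
  intro p hp
  simp only [Set.mem_setOf_eq] at hp ⊢
  have h1k : 1 < wk := by linarith
  have h1j : 1 < wj := by linarith
  set w' : ℝ := wj / (1 + εC) with hw's
  have hw' : 1 < w' := by
    rw [hw's, lt_div_iff₀ (by linarith)]; linarith
  have hdk : (0:ℝ) < wk ^ 2 - 1 := by nlinarith
  have hdj : (0:ℝ) < w' ^ 2 - 1 := by nlinarith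
  set tk : ℝ := Lk / (wk ^ 2 - 1) with htks
  set tj : ℝ := Lj / (w' ^ 2 - 1) with htjs
  have htk : 0 < tk := div_pos hLk hdk
  have htj : 0 < tj := div_pos hLj hdj
  -- endpoint inequalities
  have end1 : tk * (wk - 1) ≤ tj * (w' - 1) := by
    have e1 : tk * (wk - 1) = Lk / (wk + 1) := by
      rw [htks, div_mul_eq_mul_div, div_eq_div_iff (ne_of_gt hdk) (by linarith)]; ring
    have e2 : tj * (w' - 1) = Lj / (w' + 1) := by
      rw [htjs, div_mul_eq_mul_div, div_eq_div_iff (ne_of_gt hdj) (by linarith)]; ring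
    rw [e1, e2, div_le_div_iff₀ (by linarith) (by linarith)]
    have hw'wj : w' ≤ wj := by
      rw [hw's, div_le_iff₀ (by linarith)]; nlinarith
    nlinarith [hA, hLk, hw'wj]
  have end2 : tk * (wk + 1) ≤ tj * (w' + 1) := by
    have e1 : tk * (wk + 1) = Lk / (wk - 1) := by
      rw [htks, div_mul_eq_mul_div, div_eq_div_iff (ne_of_gt hdk) (by linarith)]; ring
    have e2 : tj * (w' + 1) = Lj / (w' - 1) := by
      rw [htjs, div_mul_eq_mul_div, div_eq_div_iff (ne_of_gt hdj) (by linarith)]; ring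
    rw [e1, e2, div_le_div_iff₀ (by linarith) (by linarith)]
    -- need : Lk * (w' - 1) ≤ Lj * (wk - 1)
    -- w' - 1 = (wj - 1 - εC)/(1+εC)
    have hw1 : w' - 1 = (wj - 1 - εC) / (1 + εC) := by
      rw [hw's]; field_simp; ring
    rw [hw1, ← mul_div_assoc, div_le_iff₀ (by linarith : (0:ℝ) < 1 + εC)]
    -- Lk * (wj - 1 - εC) ≤ Lj * (wk - 1) * (1 + εC)
    have hP : (wk + 1) * (wj - 1 - εC) ≤ (1 + εC) * (wk - 1) * (wj + 1) := by
      nlinarith [hX, hεC, hwk, h1k, h1j]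
    have step1 : Lk * (wj + 1) * (wj - 1 - εC) ≤ Lj * (wk + 1) * (wj - 1 - εC) :=
      mul_le_mul_of_nonneg_right hA (by linarith)
    have step2 : Lj * ((wk + 1) * (wj - 1 - εC)) ≤ Lj * ((1 + εC) * (wk - 1) * (wj + 1)) :=
      mul_le_mul_of_nonneg_left hP hLj.le
    have hfin : Lk * (wj - 1 - εC) * (wj + 1) ≤ Lj * (wk - 1) * (1 + εC) * (wj + 1) := by
      nlinarith [step1, step2]
    exact le_of_mul_le_mul_right hfin (by linarith : (0:ℝ) < wj + 1)
  -- ball form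
  have hballk : ‖p + tk • u‖ ≤ tk * wk :=
    (apollonius_iff wk Lk h1k hLk u p hu).mp hp
  have htri : ‖p + tj • u‖ ≤ tj * w' := by
    have h4 : ‖p + tj • u‖ ≤ ‖p + tk • u‖ + |tj - tk| := by
      have : p + tj • u = (p + tk • u) + (tj - tk) • u := by
        rw [sub_smul]; abel
      rw [this]
      calc ‖(p + tk • u) + (tj - tk) • u‖ ≤ ‖p + tk • u‖ + ‖(tj - tk) • u‖ :=
            norm_add_le _ _
        _ = ‖p + tk • u‖ + |tj - tk| := by rw [norm_smul, hu, Real.norm_eq_abs, mul_one]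
    have habs : |tj - tk| ≤ tj * w' - tk * wk := by
      rw [abs_le]; constructor <;> [linarith [end2]; linarith [end1]]
    linarith
  exact (apollonius_iff w' Lj hw' hLj u p hu).mpr htri

/-- Constant per ray: for sites on a common ray from the origin with effective weights at
least `1 + εS`, there is a subset `C` of at most `8/(εC·εS)` balls whose intersection is
contained in the `(1+εC)`-enlargement of every ball of the family. -/
theorem const_per_ray (d : ℕ) (hd : 1 ≤ d) (εC εS : ℝ)
    (h1 : 0 < εC) (h2 : εC < εS) (h3 : εS ≤ 1)
    (u : EuclideanSpace ℝ (Fin d)) (hu : ‖u‖ = 1)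
    {ι : Type*} (J : Finset ι) (ℓ w : ι → ℝ)
    (hℓ : ∀ i ∈ J, 0 < ℓ i) (hw : ∀ i ∈ J, 1 + εS ≤ w i) :
    ∃ C ⊆ J, (C.card : ℝ) ≤ 8 / (εC * εS) ∧
      ∀ j ∈ J,
        (⋂ k ∈ C, {p : EuclideanSpace ℝ (Fin d) | w k * ‖p‖ ≤ ‖p - ℓ k • u‖}) ⊆
          {p : EuclideanSpace ℝ (Fin d) | (w j / (1 + εC)) * ‖p‖ ≤ ‖p - ℓ j • u‖} := by
  classical
  have hεS : 0 < εS := lt_trans h1 h2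
  have hpos : 0 < εC * εS := mul_pos h1 hεS
  rcases J.eq_empty_or_nonempty with rfl | ⟨i₀, hi₀⟩
  · refine ⟨∅, Finset.Subset.refl _, ?_, by simp⟩
    simp only [Finset.card_empty, Nat.cast_zero]
    positivity
  haveI : Inhabited ι := ⟨i₀⟩
  set x : ι → ℝ := fun i => 2 / (w i - 1) with hx
  set bkt : ι → ℕ := fun i => ⌈x i / εC⌉₊ with hbkt
  set a : ι → ℝ := fun i => ℓ i / (w i + 1) with ha
  have hw1 : ∀ i ∈ J, 1 < w i := fun i hi => by have := hw i hi; linarith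
  have hpick : ∀ m : ℕ, ∃ k, m ∈ J.image bkt →
      k ∈ J ∧ bkt k = m ∧ ∀ i ∈ J, bkt i = m → a k ≤ a i := by
    intro m
    by_cases hm : m ∈ J.image bkt
    · obtain ⟨i, hi, him⟩ := Finset.mem_image.mp hm
      have hne : (J.filter fun i => bkt i = m).Nonempty :=
        ⟨i, Finset.mem_filter.mpr ⟨hi, him⟩⟩
      obtain ⟨k, hk, hmin⟩ := Finset.exists_min_image _ a hne
      rw [Finset.mem_filter] at hk
      exact ⟨k, fun _ => ⟨hk.1, hk.2,
        fun i' hi' hib => hmin i' (Finset.mem_filter.mpr ⟨hi', hib⟩)⟩⟩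
    · exact ⟨i₀, fun h => absurd h hm⟩
  choose g hg using hpick
  have hg1 : ∀ m ∈ J.image bkt, g m ∈ J := fun m hm => (hg m hm).1
  have hg2 : ∀ m ∈ J.image bkt, bkt (g m) = m := fun m hm => (hg m hm).2.1
  have hg3 : ∀ m ∈ J.image bkt, ∀ i ∈ J, bkt i = m → a (g m) ≤ a i :=
    fun m hm => (hg m hm).2.2
  refine ⟨(J.image bkt).image g, ?_, ?_, ?_⟩
  · rw [Finset.image_subset_iff]
    exact fun m hm => hg1 m hm
  · -- cardinality bound
    set M : ℕ := ⌈2 / (εC * εS)⌉₊ with hM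
    have hsub : J.image bkt ⊆ Finset.Icc 1 M := by
      intro m hm
      obtain ⟨i, hi, him⟩ := Finset.mem_image.mp hm
      have hwi := hw1 i hi
      have hxpos : 0 < x i := by
        rw [hx]; exact div_pos two_pos (by linarith)
      have hle : x i / εC ≤ 2 / (εC * εS) := by
        have hxle : x i ≤ 2 / εS := by
          rw [hx]
          exact div_le_div_of_nonneg_left (by norm_num) hεS (by have := hw i hi; linarith)
        have hxs : x i * εS ≤ 2 := (le_div_iff₀ hεS).mp hxle
        rw [div_le_div_iff₀ h1 hpos]
        nlinarith [hxs, h1, hεS]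
      rw [Finset.mem_Icc, ← him]
      constructor
      · exact Nat.one_le_ceil_iff.mpr (div_pos hxpos h1)
      · exact Nat.ceil_le_ceil hle
    have hcard1 : ((J.image bkt).image g).card ≤ M := by
      calc ((J.image bkt).image g).card ≤ (J.image bkt).card := Finset.card_image_le
        _ ≤ (Finset.Icc 1 M).card := Finset.card_le_card hsub
        _ = M := by rw [Nat.card_Icc]; omega
    have hMle : (M : ℝ) ≤ 2 / (εC * εS) + 1 :=
      le_of_lt (Nat.ceil_lt_add_one (by positivity))
    have h6 : (1:ℝ) ≤ 6 / (εC * εS) := by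
      rw [le_div_iff₀ hpos]; nlinarith
    calc (((J.image bkt).image g).card : ℝ) ≤ (M : ℝ) := by exact_mod_cast hcard1
      _ ≤ 2 / (εC * εS) + 1 := hMle
      _ ≤ 2 / (εC * εS) + 6 / (εC * εS) := by linarith
      _ = 8 / (εC * εS) := by rw [← add_div]; norm_num
  · -- coverage
    intro j hj p hp
    have hmj : bkt j ∈ J.image bkt := Finset.mem_image.mpr ⟨j, hj, rfl⟩
    set k : ι := g (bkt j) with hk
    have hkJ : k ∈ J := hg1 _ hmj
    have hkC : k ∈ (J.image bkt).image g := Finset.mem_image.mpr ⟨bkt j, hmj, rfl⟩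
    have hkb : bkt k = bkt j := hg2 _ hmj
    have hka : a k ≤ a j := hg3 _ hmj j hj rfl
    have hpk : p ∈ {q : EuclideanSpace ℝ (Fin d) | w k * ‖q‖ ≤ ‖q - ℓ k • u‖} := by
      simp only [Set.mem_iInter] at hp
      exact hp k hkC
    -- derive the cleared inequalities
    have hwk := hw k hkJ; have hwj := hw j hj
    have hℓk := hℓ k hkJ; have hℓj := hℓ j hj
    have hwk1 : 1 + εC < w k := by linarith
    have hwj1 : 1 + εC < w j := by linarith
    have hA : ℓ k * (w j + 1) ≤ ℓ j * (w k + 1) := by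
      rw [ha] at hka
      exact (div_le_div_iff₀ (by linarith) (by linarith)).mp hka
    have hX : 2 * (w j - 1) ≤ (2 + εC * (w j - 1)) * (w k - 1) := by
      -- from equal buckets: x k < x j + εC
      have hxk : x k / εC ≤ (bkt k : ℝ) := Nat.le_ceil _
      have hxj : (bkt j : ℝ) < x j / εC + 1 := by
        have : 0 ≤ x j / εC := by
          have : 0 < x j := div_pos two_pos (by linarith)
          positivity
        exact Nat.ceil_lt_add_one this
      have hxlt : x k < x j + εC := by
        rw [hkb] at hxk
        have h5 : x k / εC < x j / εC + 1 := lt_of_le_of_lt hxk hxj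
        calc x k = x k / εC * εC := by field_simp
          _ < (x j / εC + 1) * εC := mul_lt_mul_of_pos_right h5 h1
          _ = x j + εC := by field_simp
      rw [hx] at hxlt
      simp only at hxlt
      have hdk : (0:ℝ) < w k - 1 := by linarith
      have hdj : (0:ℝ) < w j - 1 := by linarith
      have h7 : 2 / (w k - 1) < (2 + εC * (w j - 1)) / (w j - 1) := by
        rw [add_div]
        calc 2 / (w k - 1) < 2 / (w j - 1) + εC := hxlt
          _ = 2 / (w j - 1) + εC * (w j - 1) / (w j - 1) := by
              rw [mul_div_assoc, div_self (ne_of_gt hdj), mul_one]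
      exact le_of_lt ((div_lt_div_iff₀ hdk hdj).mp h7)
    exact ball_subset εC h1 u hu (w k) (w j) (ℓ k) (ℓ j) hwk1 hwj1 hℓk hℓj hA hX hpk
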